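/- For r > 0 and λ ∈ (0, 1/2], define I_r(λ) = ∫_0^∞ e^{-t} t^{r/2 - 1} · (λ/(2√t)) / (1 + λ/(2√t)) dt. Then: (i) if 0 < r < 1 there is c(r) with I_r(λ) ≤ c(r) λ^r for all λ ∈ (0, 1/2]; (ii) if r = 1 there is c with I_1(λ) ≤ c λ log(1/λ) for all λ ∈ (0, 1/2]; (iii) if r > 1 there is c(r) with I_r(λ) ≤ c(r) λ for all λ ∈ (0, 1/2]. -/

import Mathlib

open MeasureTheory

/-- `I_r(λ) = ∫_0^∞ e^{-t} t^{r/2-1} (λ/(2√t))/(1+λ/(2√t)) dt`. -/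
noncomputable def Ir (r lam : ℝ) : ℝ :=
  ∫ t in Set.Ioi (0:ℝ), Real.exp (-t) * t ^ (r / 2 - 1) *
    ((lam / (2 * Real.sqrt t)) / (1 + lam / (2 * Real.sqrt t)))

open Set Real

noncomputable def gfun (r lam t : ℝ) : ℝ :=
  Real.exp (-t) * t ^ (r / 2 - 1) *
    ((lam / (2 * Real.sqrt t)) / (1 + lam / (2 * Real.sqrt t)))

lemma gfun_meas (r lam : ℝ) :
    AEStronglyMeasurable (gfun r lam) (volume.restrict (Set.Ioi (0:ℝ))) := by
  apply Measurable.aestronglyMeasurable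
  unfold gfun
  have h1 : Measurable fun t : ℝ => lam / (2 * Real.sqrt t) :=
    (measurable_const.mul Real.continuous_sqrt.measurable).const_div lam
  exact ((Real.measurable_exp.comp measurable_neg).mul
    (measurable_id.pow_const _)).mul (h1.div (measurable_const.add h1))

-- fraction bounds
lemma frac_nonneg {x : ℝ} (hx : 0 ≤ x) : 0 ≤ x / (1 + x) := by positivity
lemma frac_le_one {x : ℝ} (hx : 0 ≤ x) : x / (1 + x) ≤ 1 := by
  rw [div_le_one (by linarith)]; linarith
lemma frac_le_self {x : ℝ} (hx : 0 ≤ x) : x / (1 + x) ≤ x := by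
  rw [div_le_iff₀ (by linarith)]; nlinarith

lemma gfun_nonneg {r lam : ℝ} (hlam : 0 ≤ lam) (t : ℝ) (ht : 0 < t) :
    0 ≤ gfun r lam t := by
  unfold gfun
  have h1 : 0 ≤ lam / (2 * Real.sqrt t) := by positivity
  have := frac_nonneg h1
  positivity

lemma gfun_le_one {r lam : ℝ} (hlam : 0 ≤ lam) (t : ℝ) (ht : 0 < t) :
    gfun r lam t ≤ Real.exp (-t) * t ^ (r / 2 - 1) := by
  unfold gfun
  have h1 : 0 ≤ lam / (2 * Real.sqrt t) := by positivity
  calc Real.exp (-t) * t ^ (r / 2 - 1) *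
      ((lam / (2 * Real.sqrt t)) / (1 + lam / (2 * Real.sqrt t)))
      ≤ Real.exp (-t) * t ^ (r / 2 - 1) * 1 := by
        apply mul_le_mul_of_nonneg_left (frac_le_one h1) (by positivity)
    _ = Real.exp (-t) * t ^ (r / 2 - 1) := mul_one _

lemma key_eq {r lam : ℝ} (t : ℝ) (ht : 0 < t) :
    Real.exp (-t) * t ^ (r / 2 - 1) * (lam / (2 * Real.sqrt t))
      = lam / 2 * (Real.exp (-t) * t ^ (r / 2 - 3/2)) := by
  have h1 : t ^ (r/2 - 1) / t ^ ((1:ℝ)/2) = t ^ (r/2 - 3/2) := by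
    rw [← Real.rpow_sub ht, show r/2 - 1 - (1:ℝ)/2 = r/2 - 3/2 by ring]
  rw [Real.sqrt_eq_rpow, ← h1]
  have h2 : (t:ℝ) ^ ((1:ℝ)/2) ≠ 0 := (Real.rpow_pos_of_pos ht _).ne'
  generalize t ^ (r/2 - 1) = A
  generalize hB : t ^ ((1:ℝ)/2) = B at h2 ⊢
  field_simp

lemma gfun_le_two {r lam : ℝ} (hlam : 0 ≤ lam) (t : ℝ) (ht : 0 < t) :
    gfun r lam t ≤ lam / 2 * (Real.exp (-t) * t ^ (r / 2 - 3/2)) := by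
  rw [← key_eq t ht]
  unfold gfun
  have h1 : 0 ≤ lam / (2 * Real.sqrt t) := by positivity
  exact mul_le_mul_of_nonneg_left (frac_le_self h1) (by positivity)

lemma gfun_integrableOn {r lam : ℝ} (hr : 0 < r) (hlam : 0 ≤ lam) :
    IntegrableOn (gfun r lam) (Set.Ioi (0:ℝ)) := by
  apply Integrable.mono (Real.GammaIntegral_convergent (by linarith : 0 < r/2))
    (gfun_meas r lam)
  filter_upwards [self_mem_ae_restrict measurableSet_Ioi] with t ht
  have ht' : (0:ℝ) < t := ht
  rw [Real.norm_eq_abs, Real.norm_eq_abs, abs_of_nonneg (gfun_nonneg hlam t ht'),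
    abs_of_nonneg (by positivity)]
  exact gfun_le_one hlam t ht'

lemma gfun_le_three {r lam : ℝ} (hlam : 0 ≤ lam) (t : ℝ) (ht : 0 < t) :
    gfun r lam t ≤ lam / 2 * t ^ (r / 2 - 3/2) := by
  refine (gfun_le_two hlam t ht).trans ?_
  have h1 : Real.exp (-t) * t ^ (r / 2 - 3/2) ≤ t ^ (r / 2 - 3/2) := by
    apply mul_le_of_le_one_left (by positivity)
    exact Real.exp_le_one_iff.mpr (by linarith)
  apply mul_le_mul_of_nonneg_left h1 (by positivity)


lemma Ir_eq (r lam : ℝ) : Ir r lam = ∫ t in Set.Ioi (0:ℝ), gfun r lam t := rfl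

lemma case3 {r : ℝ} (hr : 1 < r) : ∃ c : ℝ, 0 < c ∧
    ∀ lam ∈ Set.Ioc (0:ℝ) (1/2), Ir r lam ≤ c * lam := by
  have hs : 0 < r/2 - 1/2 := by linarith
  refine ⟨Real.Gamma (r/2 - 1/2) / 2, div_pos (Real.Gamma_pos_of_pos hs) two_pos, ?_⟩
  rintro lam ⟨hl0, hl2⟩
  rw [Ir_eq]
  have hint1 : IntegrableOn (fun t => lam / 2 * (Real.exp (-t) * t ^ (r/2 - 3/2)))
      (Set.Ioi (0:ℝ)) := by
    have h0 := (Real.GammaIntegral_convergent hs).const_mul (lam / 2)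
    rw [show r/2 - (1:ℝ)/2 - 1 = r/2 - 3/2 by ring] at h0
    exact h0
  have h := setIntegral_mono_on (gfun_integrableOn (by linarith) hl0.le) hint1
    measurableSet_Ioi (fun t ht => gfun_le_two hl0.le t ht)
  refine h.trans ?_
  rw [integral_const_mul, Real.Gamma_eq_integral hs,
    show r/2 - (1:ℝ)/2 - 1 = r/2 - 3/2 by ring]
  exact le_of_eq (by ring)

lemma rpow_Ioc_integral {p b : ℝ} (hp : -1 < p) (hb : 0 < b) :
    ∫ t in Set.Ioc (0:ℝ) b, t ^ p = b ^ (p + 1) / (p + 1) := by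
  rw [← intervalIntegral.integral_of_le hb.le, integral_rpow (Or.inl hp),
    Real.zero_rpow (by linarith), sub_zero]

lemma rpow_Ioc_integrable {p b : ℝ} (hp : -1 < p) (hb : 0 < b) :
    IntegrableOn (fun t : ℝ => t ^ p) (Set.Ioc (0:ℝ) b) :=
  (intervalIntegral.intervalIntegrable_rpow' hp (a := 0) (b := b)).1

lemma case1 {r : ℝ} (hr0 : 0 < r) (hr1 : r < 1) : ∃ c : ℝ, 0 < c ∧
    ∀ lam ∈ Set.Ioc (0:ℝ) (1/2), Ir r lam ≤ c * lam ^ r := by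
  have h1r : (0:ℝ) < 1 - r := by linarith
  refine ⟨2 / r + 1 / (1 - r), by positivity, ?_⟩
  rintro lam ⟨hl0, hl2⟩
  set a := lam ^ (2:ℝ) with ha_def
  have ha : 0 < a := Real.rpow_pos_of_pos hl0 _
  have hgi := gfun_integrableOn hr0 hl0.le
  have hgi1 : IntegrableOn (gfun r lam) (Set.Ioc 0 a) :=
    hgi.mono_set Set.Ioc_subset_Ioi_self
  have hgi2 : IntegrableOn (gfun r lam) (Set.Ioi a) :=
    hgi.mono_set (Set.Ioi_subset_Ioi ha.le)
  have hsplit : Ir r lam = (∫ t in Set.Ioc 0 a, gfun r lam t) +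
      ∫ t in Set.Ioi a, gfun r lam t := by
    rw [Ir_eq, ← Set.Ioc_union_Ioi_eq_Ioi ha.le,
      setIntegral_union Set.Ioc_disjoint_Ioi_same measurableSet_Ioi hgi1 hgi2]
  -- piece 1
  have hp1 : (-1:ℝ) < r/2 - 1 := by linarith
  have h1 : (∫ t in Set.Ioc 0 a, gfun r lam t) ≤ 2 / r * lam ^ r := by
    have hb := setIntegral_mono_on hgi1 (rpow_Ioc_integrable hp1 ha)
      measurableSet_Ioc (fun t ht => by
        refine (gfun_le_one hl0.le t ht.1).trans ?_
        exact mul_le_of_le_one_left (Real.rpow_nonneg ht.1.le _)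
          (Real.exp_le_one_iff.mpr (by linarith [ht.1])))
    refine hb.trans (le_of_eq ?_)
    rw [rpow_Ioc_integral hp1 ha, show r/2 - 1 + 1 = r/2 by ring, ha_def,
      ← Real.rpow_mul hl0.le, show (2:ℝ) * (r/2) = r by ring]
    field_simp
  -- piece 2
  have hp2 : r/2 - 3/2 < (-1:ℝ) := by linarith
  have h2 : (∫ t in Set.Ioi a, gfun r lam t) ≤ 1 / (1 - r) * lam ^ r := by
    have hint2 : IntegrableOn (fun t : ℝ => lam / 2 * t ^ (r/2 - 3/2)) (Set.Ioi a) :=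
      (integrableOn_Ioi_rpow_of_lt hp2 ha).const_mul _
    have hb := setIntegral_mono_on hgi2 hint2 measurableSet_Ioi
      (fun t ht => gfun_le_three hl0.le t (ha.trans ht))
    refine hb.trans (le_of_eq ?_)
    rw [integral_const_mul, integral_Ioi_rpow_of_lt hp2 ha,
      show r/2 - 3/2 + 1 = r/2 - 1/2 by ring, ha_def, ← Real.rpow_mul hl0.le,
      show (2:ℝ) * (r/2 - 1/2) = r - 1 by ring]
    have hx : lam * lam ^ (r - 1) = lam ^ r := by
      rw [← Real.rpow_one_add' hl0.le (by linarith : 1 + (r-1) ≠ 0),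
        show 1 + (r - 1) = r by ring]
    have hA : (r:ℝ)/2 - 1/2 ≠ 0 := ne_of_lt (by linarith)
    have hB : (1:ℝ) - r ≠ 0 := h1r.ne'
    rw [← hx, show r/(2:ℝ) - 1/2 = (r-1)/2 by ring]
    have hr1' : (r - 1:ℝ) ≠ 0 := sub_ne_zero.mpr (by linarith)
    field_simp
    ring
  rw [hsplit]
  have := add_le_add h1 h2
  linarith

lemma case2 : ∃ c : ℝ, 0 < c ∧
    ∀ lam ∈ Set.Ioc (0:ℝ) (1/2), Ir 1 lam ≤ c * lam * Real.log (1 / lam) := by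
  refine ⟨6, by norm_num, ?_⟩
  rintro lam ⟨hl0, hl2⟩
  set a := lam ^ (2:ℝ) with ha_def
  have ha : 0 < a := Real.rpow_pos_of_pos hl0 _
  have ha1 : a ≤ 1 := by
    rw [ha_def]
    calc lam ^ (2:ℝ) ≤ (1/2:ℝ) ^ (2:ℝ) :=
          Real.rpow_le_rpow hl0.le hl2 (by norm_num)
      _ ≤ 1 := by
          rw [show (2:ℝ) = ((2:ℕ):ℝ) by norm_num, Real.rpow_natCast]; norm_num
  have hgi := gfun_integrableOn (r := 1) one_pos hl0.le
  have hgi1 : IntegrableOn (gfun 1 lam) (Set.Ioc 0 a) :=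
    hgi.mono_set Set.Ioc_subset_Ioi_self
  have hgi2 : IntegrableOn (gfun 1 lam) (Set.Ioc a 1) :=
    hgi.mono_set (fun x hx => hx.1.trans' ha)
  have hgi3 : IntegrableOn (gfun 1 lam) (Set.Ioi 1) :=
    hgi.mono_set (Set.Ioi_subset_Ioi zero_le_one)
  have hgi23 : IntegrableOn (gfun 1 lam) (Set.Ioi a) :=
    hgi.mono_set (Set.Ioi_subset_Ioi ha.le)
  have hsplit : Ir 1 lam = (∫ t in Set.Ioc 0 a, gfun 1 lam t) +
      ((∫ t in Set.Ioc a 1, gfun 1 lam t) + ∫ t in Set.Ioi 1, gfun 1 lam t) := by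
    rw [Ir_eq, ← Set.Ioc_union_Ioi_eq_Ioi ha.le,
      setIntegral_union Set.Ioc_disjoint_Ioi_same measurableSet_Ioi hgi1 hgi23,
      ← Set.Ioc_union_Ioi_eq_Ioi ha1,
      setIntegral_union Set.Ioc_disjoint_Ioi_same measurableSet_Ioi hgi2 hgi3]
  -- piece 1
  have h1 : (∫ t in Set.Ioc 0 a, gfun 1 lam t) ≤ 2 * lam := by
    have hp1 : (-1:ℝ) < (1:ℝ)/2 - 1 := by norm_num
    have hb := setIntegral_mono_on hgi1 (rpow_Ioc_integrable hp1 ha)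
      measurableSet_Ioc (fun t ht => by
        refine (gfun_le_one hl0.le t ht.1).trans ?_
        exact mul_le_of_le_one_left (Real.rpow_nonneg ht.1.le _)
          (Real.exp_le_one_iff.mpr (by linarith [ht.1])))
    refine hb.trans (le_of_eq ?_)
    rw [rpow_Ioc_integral hp1 ha, show (1:ℝ)/2 - 1 + 1 = 1/2 by ring, ha_def,
      ← Real.rpow_mul hl0.le, show (2:ℝ) * (1/2) = 1 by ring, Real.rpow_one]
    ring
  -- piece 2
  have h2 : (∫ t in Set.Ioc a 1, gfun 1 lam t) ≤ lam * Real.log (1/lam) := by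
    have hint2 : IntegrableOn (fun t : ℝ => lam / 2 * (1 / t)) (Set.Ioc a 1) := by
      have hc : ContinuousOn (fun t : ℝ => lam / 2 * (1 / t)) (Set.uIcc a 1) := by
        apply continuousOn_const.mul
        apply continuousOn_const.div continuousOn_id
        intro x hx
        rw [Set.uIcc_of_le ha1] at hx
        exact (ha.trans_le hx.1).ne'
      exact hc.intervalIntegrable.1
    have hb := setIntegral_mono_on hgi2 hint2 measurableSet_Ioc (fun t ht => by
      have ht0 : 0 < t := ha.trans ht.1
      refine (gfun_le_three hl0.le t ht0).trans (le_of_eq ?_)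
      rw [show (1:ℝ)/2 - 3/2 = -1 by norm_num, Real.rpow_neg_one, one_div])
    refine hb.trans (le_of_eq ?_)
    rw [← intervalIntegral.integral_of_le ha1, intervalIntegral.integral_const_mul,
      integral_one_div_of_pos ha one_pos, one_div a, Real.log_inv, ha_def,
      Real.log_rpow hl0, one_div lam, Real.log_inv]
    ring
  -- piece 3
  have h3 : (∫ t in Set.Ioi 1, gfun 1 lam t) ≤ lam / 2 := by
    have hint3 : IntegrableOn (fun t : ℝ => lam / 2 * Real.exp (-t)) (Set.Ioi 1) := by
      have h0 := (exp_neg_integrableOn_Ioi 1 (one_pos)).const_mul (lam / 2)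
      simpa [IntegrableOn] using h0
    have hb := setIntegral_mono_on hgi3 hint3 measurableSet_Ioi (fun t ht => by
      have ht1 : (1:ℝ) ≤ t := le_of_lt ht
      refine (gfun_le_two hl0.le t (by linarith)).trans ?_
      have : Real.exp (-t) * t ^ ((1:ℝ)/2 - 3/2) ≤ Real.exp (-t) * 1 := by
        apply mul_le_mul_of_nonneg_left _ (Real.exp_nonneg _)
        exact Real.rpow_le_one_of_one_le_of_nonpos ht1 (by norm_num)
      rw [mul_one] at this
      exact mul_le_mul_of_nonneg_left this (by positivity))
    refine hb.trans ?_
    rw [integral_const_mul, integral_exp_neg_Ioi]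
    have : Real.exp (-1) ≤ 1 := Real.exp_le_one_iff.mpr (by norm_num)
    nlinarith
  rw [hsplit]
  have hL : Real.log 2 ≤ Real.log (1/lam) := by
    apply Real.log_le_log two_pos
    rw [le_div_iff₀ hl0]; linarith
  have hlog2 : (0.69:ℝ) < Real.log 2 := by
    have := Real.log_two_gt_d9; linarith
  nlinarith [mul_le_mul_of_nonneg_left hL hl0.le,
    mul_lt_mul_of_pos_left hlog2 hl0]

/-- (i) for `0 < r < 1`, `I_r(λ) ≤ c(r) λ^r`; (ii) `I_1(λ) ≤ c λ log(1/λ)`;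
(iii) for `r > 1`, `I_r(λ) ≤ c(r) λ`, all for `λ ∈ (0, 1/2]`. -/
theorem stmt17 :
    (∀ r : ℝ, 0 < r → r < 1 → ∃ c : ℝ, 0 < c ∧
      ∀ lam ∈ Set.Ioc (0:ℝ) (1/2), Ir r lam ≤ c * lam ^ r) ∧
    (∃ c : ℝ, 0 < c ∧
      ∀ lam ∈ Set.Ioc (0:ℝ) (1/2), Ir 1 lam ≤ c * lam * Real.log (1 / lam)) ∧
    (∀ r : ℝ, 1 < r → ∃ c : ℝ, 0 < c ∧
      ∀ lam ∈ Set.Ioc (0:ℝ) (1/2), Ir r lam ≤ c * lam) :=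
  ⟨fun _ h1 h2 => case1 h1 h2, case2, fun _ hr => case3 hr⟩
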